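/- arXiv:1905.00613 — 5 statements merged into one kernel-verified Lean document; each statement's English description precedes it below -/
import Mathlib

section
/- The number of non-decreasing self-bounded functions on {1,...,n} (functions f with f(i) ≤ i for all i and f(i) ≤ f(i+1) for 1 ≤ i < n) equals the n-th Catalan number. -/
open List DyckStep Finset

private lemma countU_add_countD (l : List DyckStep) : l.count U + l.count D = l.length := by
  induction l with
  | nil => simp
  | cons a l ih => cases a <;> simp [List.count_cons] <;> omega

private lemma count_ofFn' {m : ℕ} (g : Fin m → DyckStep) (s : DyckStep) :
    (List.ofFn g).count s = (Finset.univ.filter fun j => g j = s).card := by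
  induction m with
  | zero => simp
  | succ m ih =>
    rw [List.ofFn_succ, List.count_cons, ih, Finset.card_filter, Finset.card_filter,
      Fin.sum_univ_succ]
    simp [Function.comp, add_comm, beq_iff_eq]

private lemma count_take_ofFn' {m : ℕ} (g : Fin m → DyckStep) (s : DyckStep) (k : ℕ)
    (hk : k ≤ m) :
    ((List.ofFn g).take k).count s
      = (Finset.univ.filter fun j : Fin m => (j : ℕ) < k ∧ g j = s).card := by
  rw [← Fin.ofFn_take_eq_take_ofFn hk, count_ofFn']
  have : (Finset.univ.filter fun j : Fin m => (j : ℕ) < k ∧ g j = s)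
      = Finset.image (Fin.castLE hk) (Finset.univ.filter fun i : Fin k => g (Fin.castLE hk i) = s) := by
    ext j
    simp only [Finset.mem_filter, Finset.mem_univ, true_and, Finset.mem_image]
    constructor
    · rintro ⟨hj, hg⟩
      exact ⟨⟨j, hj⟩, by simpa using hg, rfl⟩
    · rintro ⟨i, hi, rfl⟩
      exact ⟨i.isLt, hi⟩
  rw [this, Finset.card_image_of_injective _ (Fin.castLE_injective hk)]
  rfl

private lemma strictMono_add_le {n m : ℕ} {v : Fin n → Fin m} (hv : StrictMono v) :
    ∀ (d : ℕ) (i j : Fin n), (i : ℕ) + d = (j : ℕ) → (v i : ℕ) + d ≤ (v j : ℕ) := by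
  intro d
  induction d with
  | zero => intro i j h; have : i = j := Fin.ext (by omega); simp [this]
  | succ d ih =>
    intro i j h
    have hj' : (i : ℕ) + d < n := by have := j.isLt; omega
    have h1 := ih i ⟨(i : ℕ) + d, hj'⟩ rfl
    have h2 : v ⟨(i : ℕ) + d, hj'⟩ < v j := hv (by simp [Fin.lt_def]; omega)
    have := Fin.lt_def.mp h2
    omega

private lemma strictMono_le_apply {n m : ℕ} {v : Fin n → Fin m} (hv : StrictMono v) (i : Fin n) :
    (i : ℕ) ≤ (v i : ℕ) := by
  have h0 : (0 : ℕ) < n := i.pos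
  have := strictMono_add_le hv i ⟨0, h0⟩ i (by simp)
  omega
private lemma dyck_length {n : ℕ} (p : DyckWord) (hp : p.semilength = n) :
    p.toList.length = 2 * n := by
  rw [← p.two_mul_semilength_eq_length, hp]

private def dyckG {n : ℕ} (p : DyckWord) (hp : p.semilength = n) : Fin (2 * n) → DyckStep :=
  fun j => p.toList.get (Fin.cast (dyck_length p hp).symm j)

private lemma ofFn_dyckG {n : ℕ} (p : DyckWord) (hp : p.semilength = n) :
    List.ofFn (dyckG p hp) = p.toList := by
  apply List.ext_get (by simp [dyck_length p hp])
  intro i h1 h2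
  simp [dyckG, List.get_ofFn]

private def dyckS {n : ℕ} (p : DyckWord) (hp : p.semilength = n) : Finset (Fin (2 * n)) :=
  Finset.univ.filter fun j => dyckG p hp j = U

private lemma card_dyckS {n : ℕ} (p : DyckWord) (hp : p.semilength = n) :
    (dyckS p hp).card = n := by
  have h := count_ofFn' (dyckG p hp) U
  rw [ofFn_dyckG] at h
  rw [dyckS, ← h]
  exact hp ▸ rfl
private def dyckE {n : ℕ} (p : DyckWord) (hp : p.semilength = n) : Fin n ↪o Fin (2 * n) :=
  (dyckS p hp).orderEmbOfFin (card_dyckS p hp)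

private lemma countU_take_dyckE {n : ℕ} (p : DyckWord) (hp : p.semilength = n) (i : Fin n) :
    (p.toList.take ((dyckE p hp i : ℕ))).count U = i := by
  set e := dyckE p hp with he
  have hk : ((e i : ℕ)) ≤ 2 * n := (e i).isLt.le
  rw [← ofFn_dyckG p hp, count_take_ofFn' _ _ _ hk]
  have himg : (Finset.univ.filter fun j : Fin (2 * n) => (j : ℕ) < (e i : ℕ) ∧ dyckG p hp j = U)
      = Finset.image e (Finset.Iio i) := by
    ext j
    simp only [Finset.mem_filter, Finset.mem_univ, true_and, Finset.mem_image, Finset.mem_Iio]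
    constructor
    · rintro ⟨hj, hg⟩
      have hjS : j ∈ dyckS p hp := by simp [dyckS, hg]
      have : j ∈ Set.range (e : Fin n → Fin (2 * n)) := by
        rw [he, dyckE, Finset.range_orderEmbOfFin]; exact_mod_cast hjS
      obtain ⟨i', rfl⟩ := this
      exact ⟨i', e.lt_iff_lt.mp (Fin.lt_def.mpr hj), rfl⟩
    · rintro ⟨i', hi', rfl⟩
      refine ⟨Fin.lt_def.mp (e.lt_iff_lt.mpr hi'), ?_⟩
      have hmem : e i' ∈ dyckS p hp := Finset.orderEmbOfFin_mem _ _ i'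
      rw [dyckS, Finset.mem_filter] at hmem
      exact hmem.2
  rw [himg, Finset.card_image_of_injective _ e.injective, Fin.card_Iio]

private lemma dyckE_le {n : ℕ} (p : DyckWord) (hp : p.semilength = n) (i : Fin n) :
    (dyckE p hp i : ℕ) ≤ 2 * (i : ℕ) := by
  set e := dyckE p hp with he
  have hk : ((e i : ℕ)) ≤ 2 * n := (e i).isLt.le
  have hU := countU_take_dyckE p hp i
  rw [← he] at hU
  have hlen : (p.toList.take ((e i : ℕ))).length = (e i : ℕ) := by
    rw [List.length_take, dyck_length p hp]; omega
  have hsum := countU_add_countD (p.toList.take ((e i : ℕ)))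
  have hle := p.count_D_le_count_U ((e i : ℕ))
  have hge : (i : ℕ) ≤ (e i : ℕ) := strictMono_le_apply e.strictMono i
  omega

private def phi {n : ℕ} (p : {p : DyckWord // p.semilength = n}) :
    {f : Fin n → Fin n // (∀ i, f i ≤ i) ∧ Monotone f} := by
  refine ⟨fun i => ⟨(dyckE p.1 p.2 i : ℕ) - i, ?_⟩, fun i => ?_, fun i j hij => ?_⟩
  · have := dyckE_le p.1 p.2 i; have := i.isLt; omega
  · have := dyckE_le p.1 p.2 i
    simp only [Fin.le_def]
    omega
  · have h1 := strictMono_add_le (dyckE p.1 p.2).strictMono ((j : ℕ) - i) i j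
      (by have := Fin.le_def.mp hij; omega)
    have := strictMono_le_apply (dyckE p.1 p.2).strictMono i
    simp only [Fin.le_def]
    omega
private lemma phi_injective {n : ℕ} : Function.Injective (phi (n := n)) := by
  rintro ⟨p, hp⟩ ⟨q, hq⟩ h
  have hfe : ∀ i : Fin n, (dyckE p hp i : ℕ) - i = (dyckE q hq i : ℕ) - i := by
    intro i
    have h2 := congrFun (congrArg Subtype.val h) i
    exact congrArg Fin.val h2
  have he : ⇑(dyckE p hp) = ⇑(dyckE q hq) := by
    funext i
    have h1 := strictMono_le_apply (dyckE p hp).strictMono i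
    have h2 := strictMono_le_apply (dyckE q hq).strictMono i
    exact Fin.ext (by have := hfe i; omega)
  have hS : dyckS p hp = dyckS q hq := by
    rw [← Finset.coe_inj]
    calc (dyckS p hp : Set (Fin (2 * n)))
        = Set.range ⇑(dyckE p hp) :=
          (Finset.range_orderEmbOfFin (dyckS p hp) (card_dyckS p hp)).symm
      _ = Set.range ⇑(dyckE q hq) := by rw [he]
      _ = (dyckS q hq : Set (Fin (2 * n))) :=
          Finset.range_orderEmbOfFin (dyckS q hq) (card_dyckS q hq)
  have hg : dyckG p hp = dyckG q hq := by
    funext j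
    have hj : j ∈ dyckS p hp ↔ j ∈ dyckS q hq := by rw [hS]
    rw [dyckS, dyckS, Finset.mem_filter, Finset.mem_filter] at hj
    simp only [Finset.mem_univ, true_and] at hj
    rcases (dyckG p hp j).dichotomy with h1 | h1 <;>
      rcases (dyckG q hq j).dichotomy with h2 | h2 <;> simp_all
  have hlist : p.toList = q.toList := by
    rw [← ofFn_dyckG p hp, ← ofFn_dyckG q hq, hg]
  exact Subtype.ext (DyckWord.ext hlist)

private lemma phi_surjective {n : ℕ} : Function.Surjective (phi (n := n)) := by
  rintro ⟨f, hb, hm⟩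
  have hfe : ∀ i : Fin n, (i : ℕ) + (f i : ℕ) < 2 * n := fun i => by
    have := i.isLt; have := (f i).isLt; omega
  set e' : Fin n → Fin (2 * n) := fun i => ⟨(i : ℕ) + (f i : ℕ), hfe i⟩ with he'
  have hmono : StrictMono e' := by
    intro i j hij
    have h1 : (f i : ℕ) ≤ f j := hm hij.le
    have h2 := Fin.lt_def.mp hij
    simp only [he', Fin.lt_def]
    omega
  set w : Fin (2 * n) → DyckStep := fun j => if ∃ i, e' i = j then U else D with hw
  have hwmem : (Finset.univ.filter fun j => w j = U) = Finset.image e' Finset.univ := by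
    ext j
    simp only [Finset.mem_filter, Finset.mem_univ, true_and, Finset.mem_image, hw]
    by_cases hc : ∃ i, e' i = j
    · simp [hc]
    · simp [hc]
  have hwU : (List.ofFn w).count U = n := by
    rw [count_ofFn', hwmem, Finset.card_image_of_injective _ hmono.injective]
    simp
  have hwD : (List.ofFn w).count D = n := by
    have h := countU_add_countD (List.ofFn w)
    rw [List.length_ofFn] at h
    omega
  have hpre : ∀ k, ((List.ofFn w).take k).count D ≤ ((List.ofFn w).take k).count U := by
    intro k
    rcases le_or_gt k (2 * n) with hk | hk
    · have himg : (Finset.univ.filter fun j : Fin (2 * n) => (j : ℕ) < k ∧ w j = U)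
          = Finset.image e' (Finset.univ.filter fun i => (e' i : ℕ) < k) := by
        ext j
        simp only [Finset.mem_filter, Finset.mem_univ, true_and, Finset.mem_image]
        constructor
        · rintro ⟨hj, hg⟩
          by_cases hc : ∃ i, e' i = j
          · obtain ⟨i, rfl⟩ := hc
            exact ⟨i, hj, rfl⟩
          · rw [hw] at hg
            simp [hc] at hg
        · rintro ⟨i, hi, rfl⟩
          refine ⟨hi, ?_⟩
          have hex : ∃ i', e' i' = e' i := ⟨i, rfl⟩
          simp [hw, hex]
      have hU : ((List.ofFn w).take k).count U
          = (Finset.univ.filter fun i : Fin n => (e' i : ℕ) < k).card := by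
        rw [count_take_ofFn' _ _ _ hk, himg,
          Finset.card_image_of_injective _ hmono.injective]
      set c := (Finset.univ.filter fun i : Fin n => (e' i : ℕ) < k).card with hc
      have hDU : ((List.ofFn w).take k).count U + ((List.ofFn w).take k).count D = k := by
        have h := countU_add_countD ((List.ofFn w).take k)
        rw [List.length_take, List.length_ofFn] at h
        omega
      have hkc : k ≤ 2 * c := by
        by_contra hcon
        push_neg at hcon
        have hcn : c < n := by omega
        set i0 : Fin n := ⟨c, hcn⟩ with hi0
        have hnotmem : ¬ ((e' i0 : ℕ) < k) := by
          intro hlt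
          have hsub : Finset.Iic i0 ⊆ Finset.univ.filter fun i => (e' i : ℕ) < k := by
            intro x hx
            rw [Finset.mem_Iic] at hx
            rw [Finset.mem_filter]
            refine ⟨Finset.mem_univ _, ?_⟩
            have hle := Fin.le_def.mp (hmono.monotone hx)
            omega
          have hcard := Finset.card_le_card hsub
          rw [Fin.card_Iic, ← hc] at hcard
          have hi0c : (i0 : ℕ) = c := rfl
          omega
        have he0 : (e' i0 : ℕ) = c + (f i0 : ℕ) := rfl
        have hi0v : (i0 : ℕ) = c := rfl
        have hfb : (f i0 : ℕ) ≤ (i0 : ℕ) := Fin.le_def.mp (hb i0)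
        omega
      omega
    · rw [List.take_of_length_le (by rw [List.length_ofFn]; omega), hwU, hwD]
  refine ⟨⟨⟨List.ofFn w, hwU.trans hwD.symm, hpre⟩, hwU⟩, ?_⟩
  set P : DyckWord := ⟨List.ofFn w, hwU.trans hwD.symm, hpre⟩ with hP
  have hgw : dyckG P hwU = w := by
    funext j
    show (List.ofFn w).get (Fin.cast (dyck_length P hwU).symm j) = w j
    rw [List.get_ofFn]
    congr 1
  have hmemS : ∀ x, e' x ∈ dyckS P hwU := by
    intro x
    show e' x ∈ Finset.univ.filter (fun j => dyckG P hwU j = U)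
    rw [Finset.mem_filter]
    refine ⟨Finset.mem_univ _, ?_⟩
    rw [hgw]
    have hex : ∃ i, e' i = e' x := ⟨x, rfl⟩
    simp [hw, hex]
  have heq : e' = ⇑(dyckE P hwU) :=
    Finset.orderEmbOfFin_unique (card_dyckS P hwU) hmemS hmono
  apply Subtype.ext
  funext i
  apply Fin.ext
  show (dyckE P hwU i : ℕ) - i = (f i : ℕ)
  rw [← heq]
  show (i : ℕ) + (f i : ℕ) - i = f i
  omega

/-- The number of non-decreasing self-bounded functions on `{1,...,n}` equals the
`n`-th Catalan number. -/
theorem card_monotone_selfBounded_eq_catalan (n : ℕ) :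
    Fintype.card {f : Fin n → Fin n // (∀ i, f i ≤ i) ∧ Monotone f} = catalan n := by
  rw [← DyckWord.card_dyckWord_semilength_eq_catalan n]
  exact (Fintype.card_of_bijective (f := phi) ⟨phi_injective, phi_surjective⟩).symm
end

section
/- Let I_n = {(i,j) : 1 ≤ i ≤ j ≤ n} and call a subset S ⊆ I_n an FB-configuration if (FB0) (1,n) ∈ S; (FB1) for every (i,j) ∈ S with (i,j) ≠ (1,n), the cohook {(k,j) : 1 ≤ k < i} ∪ {(i,ℓ) : j < ℓ ≤ n} meets S; and (FB2) for every k with 2 ≤ k ≤ n, the virtual cohook {(m, k−1) : 1 ≤ m < k} ∪ {(k, ℓ) : k ≤ ℓ ≤ n} meets S. Then the number of FB-configurations in I_n is Π_{i=1}^n (2^i − 1). -/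
/-- The index set `I_n = {(i,j) : 1 ≤ i ≤ j ≤ n}`, as a finset of pairs of naturals. -/
def indexSet (n : ℕ) : Finset (ℕ × ℕ) :=
  (Finset.Icc 1 n ×ˢ Finset.Icc 1 n).filter (fun p => p.1 ≤ p.2)

/-- The cohook of `(i,j)`: `{(k,j) : 1 ≤ k < i} ∪ {(i,ℓ) : j < ℓ ≤ n}`.
For `j = k - 1` with `2 ≤ k ≤ n` this is the virtual cohook
`{(m,k−1) : 1 ≤ m < k} ∪ {(k,ℓ) : k ≤ ℓ ≤ n}`. -/
def cohook (n i j : ℕ) : Finset (ℕ × ℕ) :=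
  (Finset.Icc 1 n ×ˢ Finset.Icc 1 n).filter
    (fun p => (p.2 = j ∧ p.1 < i) ∨ (p.1 = i ∧ j < p.2))

/-- `S ⊆ I_n` is an FB-configuration if `(1,n) ∈ S`, each element `≠ (1,n)` of `S` has its
cohook meeting `S`, and each virtual cohook (for `2 ≤ k ≤ n`) meets `S`. -/
def IsFB (n : ℕ) (S : Finset (ℕ × ℕ)) : Prop :=
  (1, n) ∈ S ∧
  (∀ p ∈ S, p ≠ (1, n) → (cohook n p.1 p.2 ∩ S).Nonempty) ∧
  (∀ k ∈ Finset.Icc 2 n, (cohook n k (k - 1) ∩ S).Nonempty)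

instance (n : ℕ) : DecidablePred (IsFB n) := fun S => by
  unfold IsFB; infer_instance

open Finset

open scoped Classical in
noncomputable def extSet (n j : ℕ) (R : Finset ℕ) : Finset (Finset (ℕ × ℕ)) :=
  ((indexSet n).filter (fun p => j < p.2)).powerset.filter (fun U =>
    (1, n) ∈ U ∧
    (∀ p ∈ U, p ≠ (1, n) → (cohook n p.1 p.2 ∩ U).Nonempty) ∧
    (∀ a ∈ R, ∃ p ∈ U, p.1 = a) ∧
    (∀ k, j + 2 ≤ k → k ≤ n → (cohook n k (k - 1) ∩ U).Nonempty))

def nextR (j : ℕ) (R C : Finset ℕ) : Finset ℕ :=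
  if hC : C.Nonempty then insert (C.min' hC) (R \ C) else insert (j + 2) R

lemma mem_cohook {n i j : ℕ} {p : ℕ × ℕ} :
    p ∈ cohook n i j ↔ (1 ≤ p.1 ∧ p.1 ≤ n ∧ 1 ≤ p.2 ∧ p.2 ≤ n) ∧
      ((p.2 = j ∧ p.1 < i) ∨ (p.1 = i ∧ j < p.2)) := by
  simp [cohook, and_assoc]

lemma mem_indexSet {n : ℕ} {p : ℕ × ℕ} :
    p ∈ indexSet n ↔ 1 ≤ p.1 ∧ p.1 ≤ p.2 ∧ p.2 ≤ n := by
  simp [indexSet]; omega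

lemma cohook_inter_nonempty {n i j : ℕ} {U : Finset (ℕ × ℕ)}
    (hU : ∀ p ∈ U, p ∈ indexSet n) :
    (cohook n i j ∩ U).Nonempty ↔
      (∃ p ∈ U, p.2 = j ∧ p.1 < i) ∨ (∃ p ∈ U, p.1 = i ∧ j < p.2) := by
  constructor
  · rintro ⟨p, hp⟩
    rw [mem_inter, mem_cohook] at hp
    rcases hp.1.2 with h | h
    · exact Or.inl ⟨p, hp.2, h⟩
    · exact Or.inr ⟨p, hp.2, h⟩
  · rintro (⟨p, hpU, h⟩ | ⟨p, hpU, h⟩) <;>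
    · refine ⟨p, mem_inter.2 ⟨mem_cohook.2 ⟨?_, ?_⟩, hpU⟩⟩
      · have := mem_indexSet.1 (hU p hpU); omega
      · first | exact Or.inl h | exact Or.inr h


lemma ext_zero (n : ℕ) (hn : 0 < n) :
    (indexSet n).powerset.filter (IsFB n) = extSet n 0 ∅ := by
  classical
  have hfil : (indexSet n).filter (fun p => 0 < p.2) = indexSet n := by
    apply filter_true_of_mem
    intro p hp
    have := mem_indexSet.1 hp; omega
  unfold extSet IsFB
  rw [hfil]
  apply filter_congr
  intro S hS
  simp only [notMem_empty, false_imp_iff, imp_true_iff, true_and]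
  constructor
  · rintro ⟨h1, h2, h3⟩
    refine ⟨h1, h2, fun k hk hk' => h3 k ?_⟩
    rw [mem_Icc]; omega
  · rintro ⟨h1, h2, h3⟩
    refine ⟨h1, h2, fun k hk => ?_⟩
    rw [mem_Icc] at hk
    exact h3 k (by omega) (by omega)


lemma mem_ext_last {n : ℕ} {R : Finset ℕ} {U : Finset (ℕ × ℕ)} (hn : 0 < n) :
    U ∈ extSet n (n - 1) R ↔
      ((∀ p ∈ U, 1 ≤ p.1 ∧ p.1 ≤ n ∧ p.2 = n) ∧ (1, n) ∈ U ∧ ∀ a ∈ R, ∃ p ∈ U, p.1 = a) := by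
  classical
  unfold extSet
  rw [mem_filter, mem_powerset]
  constructor
  · rintro ⟨hsub, h1, _h2, h3, _h4⟩
    refine ⟨fun p hp => ?_, h1, h3⟩
    have := hsub hp
    rw [mem_filter] at this
    have hi := mem_indexSet.1 this.1
    have := this.2
    omega
  · rintro ⟨hbd, h1, h3⟩
    refine ⟨fun p hp => ?_, h1, fun p hp hne => ?_, h3, fun k hk hk' => ?_⟩
    · have := hbd p hp
      rw [mem_filter, mem_indexSet]
      omega
    · refine ⟨(1, n), mem_inter.2 ⟨mem_cohook.2 ⟨by simp; omega, ?_⟩, h1⟩⟩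
      have hb := hbd p hp
      have hp1 : p.1 ≠ 1 := by
        intro h
        apply hne
        have : p = (p.1, p.2) := rfl
        rw [this, h, hb.2.2]
      exact Or.inl ⟨hb.2.2.symm, by omega⟩
    · omega

lemma insert_one_erase (R : Finset ℕ) : insert 1 (R.erase 1) = insert 1 R := by
  ext a
  simp [mem_insert, mem_erase]
  tauto

lemma card_ext_base (n : ℕ) (R : Finset ℕ) (hn : 0 < n) (hR : R ⊆ Icc 1 n) :
    (extSet n (n - 1) R).card = 2 ^ ((n - 1) - (R.erase 1).card) := by
  classical
  have hins : insert 1 R ⊆ Icc 1 n := by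
    intro a ha
    rcases mem_insert.1 ha with h | h
    · rw [h, mem_Icc]; omega
    · exact hR h
  have hcard : ((Icc 1 n \ insert 1 R).powerset).card = 2 ^ ((n - 1) - (R.erase 1).card) := by
    rw [card_powerset, card_sdiff_of_subset hins]
    congr 1
    rw [← insert_one_erase R, card_insert_of_notMem (notMem_erase 1 R), Nat.card_Icc]
    have : (R.erase 1).card ≤ n - 1 := by
      have hsub : R.erase 1 ⊆ Icc 2 n := by
        intro a ha
        rw [mem_erase] at ha
        have := mem_Icc.1 (hR ha.2)
        rw [mem_Icc]; omega
      have := card_le_card hsub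
      rw [Nat.card_Icc] at this
      omega
    omega
  rw [← hcard]
  apply card_bij' (fun U _ => U.image Prod.fst \ insert 1 R)
    (fun D _ => (insert 1 R ∪ D).image (fun a => (a, n)))
  · -- maps into powerset
    intro U hU
    rw [mem_powerset]
    apply sdiff_subset_sdiff _ le_rfl
    intro a ha
    rcases mem_image.1 ha with ⟨p, hp, rfl⟩
    have := ((mem_ext_last hn).1 hU).1 p hp
    rw [mem_Icc]; omega
  · -- maps into extSet
    intro D hD
    rw [mem_powerset] at hD
    rw [mem_ext_last hn]
    refine ⟨fun p hp => ?_, ?_, fun a ha => ?_⟩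
    · rcases mem_image.1 hp with ⟨a, ha, rfl⟩
      rcases mem_union.1 ha with h | h
      · rcases mem_insert.1 h with h' | h'
        · simp [h']; omega
        · have := mem_Icc.1 (hR h'); simp; omega
      · have := mem_Icc.1 ((sdiff_subset) (hD h)); simp; omega
    · exact mem_image.2 ⟨1, mem_union_left _ (mem_insert_self 1 R), rfl⟩
    · exact ⟨(a, n), mem_image.2 ⟨a, mem_union_left _ (mem_insert_of_mem ha), rfl⟩, rfl⟩
  · -- left inverse
    intro U hU
    rw [mem_ext_last hn] at hU
    obtain ⟨hbd, h1, h3⟩ := hU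
    have hsub : insert 1 R ⊆ U.image Prod.fst := by
      intro a ha
      rcases mem_insert.1 ha with h | h
      · exact h ▸ mem_image.2 ⟨(1, n), h1, rfl⟩
      · rcases h3 a h with ⟨p, hp, hpa⟩
        exact mem_image.2 ⟨p, hp, hpa⟩
    rw [union_sdiff_of_subset hsub]
    ext p
    simp only [mem_image]
    constructor
    · rintro ⟨a, ⟨q, hq, rfl⟩, rfl⟩
      have h2 := (hbd q hq).2.2
      have hq2 : (q.1, n) = q := Prod.ext rfl h2.symm
      rw [hq2]; exact hq
    · intro hp
      exact ⟨p.1, ⟨p, hp, rfl⟩, Prod.ext rfl (hbd p hp).2.2.symm⟩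
  · -- right inverse
    intro D hD
    rw [mem_powerset] at hD
    rw [image_image]
    have : ((insert 1 R ∪ D).image (Prod.fst ∘ fun a => (a, n))) = insert 1 R ∪ D := by
      have : (Prod.fst ∘ fun a : ℕ => (a, n)) = id := rfl
      rw [this, image_id]
    rw [this]
    rw [union_sdiff_cancel_left]
    rw [disjoint_left]
    intro a ha haD
    exact (mem_sdiff.1 (hD haD)).2 ha


lemma mem_extSet_subset {n j : ℕ} {R : Finset ℕ} {U : Finset (ℕ × ℕ)}
    (hU : U ∈ extSet n j R) : ∀ p ∈ U, p ∈ indexSet n ∧ j < p.2 := by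
  classical
  intro p hp
  unfold extSet at hU
  rw [mem_filter, mem_powerset] at hU
  have := hU.1 hp
  rw [mem_filter] at this
  exact this

lemma card_ext_step (n j : ℕ) (R : Finset ℕ) (hj : j + 1 < n) :
    (extSet n j R).card
      = ∑ C ∈ (Icc 1 (j + 1)).powerset, (extSet n (j + 1) (nextR j R C)).card := by
  classical
  have key : ∀ C ∈ (Icc 1 (j + 1)).powerset,
      ((extSet n j R).filter
        (fun U => (U.filter (fun p => p.2 = j + 1)).image Prod.fst = C)).card
      = (extSet n (j + 1) (nextR j R C)).card := by
    intro C hC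
    rw [mem_powerset] at hC
    apply card_bij' (fun U _ => U.filter (fun p => j + 1 < p.2))
      (fun U' _ => U' ∪ C.image (fun a => (a, j + 1)))
    · -- forward membership
      intro U hU0
      rw [mem_filter] at hU0
      obtain ⟨hU, hCol⟩ := hU0
      have hsub := mem_extSet_subset hU
      unfold extSet at hU ⊢
      rw [mem_filter, mem_powerset] at hU ⊢
      obtain ⟨-, h1, h2, h3, h4⟩ := hU
      have hUsub : ∀ p ∈ U.filter (fun p => j + 1 < p.2), p ∈ U ∧ j + 1 < p.2 := by
        intro p hp; rw [mem_filter] at hp; exact hp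
      refine ⟨?_, ?_, ?_, ?_, ?_⟩
      · intro p hp
        obtain ⟨hpU, hpgt⟩ := hUsub p hp
        rw [mem_filter]
        exact ⟨(hsub p hpU).1, hpgt⟩
      · rw [mem_filter]
        exact ⟨h1, by omega⟩
      · intro p hp hne
        obtain ⟨hpU, hpgt⟩ := hUsub p hp
        obtain ⟨w, hw⟩ := h2 p hpU hne
        rw [mem_inter, mem_cohook] at hw
        refine ⟨w, mem_inter.2 ⟨mem_cohook.2 ⟨hw.1.1, hw.1.2⟩, ?_⟩⟩
        rw [mem_filter]
        rcases hw.1.2 with hc | hc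
        · exact ⟨hw.2, by omega⟩
        · exact ⟨hw.2, by omega⟩
      · -- row conditions for nextR
        intro a ha
        unfold nextR at ha
        by_cases hCne : C.Nonempty
        · rw [dif_pos hCne] at ha
          rcases mem_insert.1 ha with rfl | haR
          · -- a = min C
            have hmem : C.min' hCne ∈ image Prod.fst (U.filter (fun p => p.2 = j + 1)) := by
              rw [hCol]; exact min'_mem C hCne
            rcases mem_image.1 hmem with ⟨p, hp, hpa⟩
            rw [mem_filter] at hp
            obtain ⟨hpU, hp2⟩ := hp
            have hne : p ≠ (1, n) := by
              intro h; rw [h] at hp2; simp at hp2; omega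
            obtain ⟨w, hw⟩ := h2 p hpU hne
            rw [mem_inter, mem_cohook] at hw
            rcases hw.1.2 with hc | hc
            · -- same column, above: contradiction with min'
              exfalso
              have hwC : w.1 ∈ C := by
                rw [← hCol]
                exact mem_image.2 ⟨w, mem_filter.2 ⟨hw.2, by omega⟩, rfl⟩
              have := C.min'_le w.1 hwC
              omega
            · refine ⟨w, mem_filter.2 ⟨hw.2, by omega⟩, by omega⟩
          · -- a ∈ R \ C
            rw [mem_sdiff] at haR
            obtain ⟨p, hpU, hpa⟩ := h3 a haR.1
            have hp2 : j < p.2 := (hsub p hpU).2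
            have hpne : p.2 ≠ j + 1 := by
              intro h
              apply haR.2
              rw [← hCol]
              exact mem_image.2 ⟨p, mem_filter.2 ⟨hpU, h⟩, by omega⟩
            exact ⟨p, mem_filter.2 ⟨hpU, by omega⟩, hpa⟩
        · rw [dif_neg hCne] at ha
          have hCempty : C = ∅ := not_nonempty_iff_eq_empty.1 hCne
          rcases mem_insert.1 ha with rfl | haR
          · -- a = j + 2, use virtual cohook condition at k = j+2
            obtain ⟨w, hw⟩ := h4 (j + 2) le_rfl (by omega)
            rw [mem_inter, mem_cohook] at hw
            rcases hw.1.2 with hc | hc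
            · exfalso
              have : w.1 ∈ C := by
                rw [← hCol]
                exact mem_image.2 ⟨w, mem_filter.2 ⟨hw.2, by omega⟩, rfl⟩
              rw [hCempty] at this
              exact notMem_empty _ this
            · exact ⟨w, mem_filter.2 ⟨hw.2, by omega⟩, by omega⟩
          · obtain ⟨p, hpU, hpa⟩ := h3 a haR
            have hp2 : j < p.2 := (hsub p hpU).2
            have hpne : p.2 ≠ j + 1 := by
              intro h
              have : p.1 ∈ C := by
                rw [← hCol]
                exact mem_image.2 ⟨p, mem_filter.2 ⟨hpU, h⟩, rfl⟩
              rw [hCempty] at this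
              exact notMem_empty _ this
            exact ⟨p, mem_filter.2 ⟨hpU, by omega⟩, hpa⟩
      · -- virtual cohook conditions for k ≥ j+3
        intro k hk hk'
        obtain ⟨w, hw⟩ := h4 k (by omega) hk'
        rw [mem_inter, mem_cohook] at hw
        refine ⟨w, mem_inter.2 ⟨mem_cohook.2 ⟨hw.1.1, hw.1.2⟩, mem_filter.2 ⟨hw.2, ?_⟩⟩⟩
        rcases hw.1.2 with hc | hc <;> omega
    · -- backward membership
      intro U' hU'
      have hsub' := mem_extSet_subset hU'
      unfold extSet at hU' ⊢
      rw [mem_filter, mem_powerset] at hU'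
      obtain ⟨hs, h1, h2, h3, h4⟩ := hU'
      have himg : ∀ p ∈ C.image (fun a => (a, j + 1)), 1 ≤ p.1 ∧ p.1 ≤ j + 1 ∧ p.2 = j + 1 := by
        intro p hp
        rcases mem_image.1 hp with ⟨a, ha, rfl⟩
        have := mem_Icc.1 (hC ha)
        exact ⟨this.1, this.2, rfl⟩
      have hU'high : ∀ p ∈ U', j + 1 < p.2 := by
        intro p hp
        exact (mem_filter.1 (hs hp)).2
      have hcolsplit : (U' ∪ C.image (fun a => (a, j + 1))).filter (fun p => p.2 = j + 1)
          = C.image (fun a => (a, j + 1)) := by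
        ext p
        rw [mem_filter, mem_union]
        constructor
        · rintro ⟨h | h, hp2⟩
          · exfalso; have := hU'high p h; omega
          · exact h
        · intro h
          exact ⟨Or.inr h, (himg p h).2.2⟩
      rw [mem_filter]
      constructor
      · rw [mem_filter, mem_powerset]
        refine ⟨?_, ?_, ?_, ?_, ?_⟩
        · intro p hp
          rcases mem_union.1 hp with h | h
          · rw [mem_filter]
            refine ⟨(mem_filter.1 (hs h)).1, by have := hU'high p h; omega⟩
          · have := himg p h
            rw [mem_filter, mem_indexSet]
            omega
        · exact mem_union_left _ h1
        · intro p hp hne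
          rcases mem_union.1 hp with h | h
          · obtain ⟨w, hw⟩ := h2 p h hne
            rw [mem_inter] at hw
            exact ⟨w, mem_inter.2 ⟨hw.1, mem_union_left _ hw.2⟩⟩
          · -- p = (a, j+1) with a ∈ C
            rcases mem_image.1 h with ⟨a, haC, rfl⟩
            have haI := mem_Icc.1 (hC haC)
            have hCne : C.Nonempty := ⟨a, haC⟩
            rcases eq_or_lt_of_le (C.min'_le a haC) with heq | hlt
            · -- a is the minimum: use row condition of nextR
              have : C.min' hCne ∈ nextR j R C := by
                unfold nextR; rw [dif_pos hCne]; exact mem_insert_self _ _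
              obtain ⟨w, hwU', hwa⟩ := h3 _ this
              refine ⟨w, mem_inter.2 ⟨mem_cohook.2 ⟨?_, Or.inr ⟨by omega, ?_⟩⟩,
                mem_union_left _ hwU'⟩⟩
              · have := mem_indexSet.1 (mem_filter.1 (hs hwU')).1
                omega
              · have := hU'high w hwU'
                omega
            · -- min C < a : the cell (min C, j+1) is above
              refine ⟨(C.min' hCne, j + 1), mem_inter.2 ⟨mem_cohook.2 ⟨?_, Or.inl ⟨rfl, hlt⟩⟩,
                mem_union_right _ (mem_image.2 ⟨C.min' hCne, min'_mem C hCne, rfl⟩)⟩⟩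
              have := mem_Icc.1 (hC (min'_mem C hCne))
              simp only []
              omega
        · intro a ha
          by_cases haC : a ∈ C
          · exact ⟨(a, j + 1), mem_union_right _ (mem_image.2 ⟨a, haC, rfl⟩), rfl⟩
          · have : a ∈ nextR j R C := by
              unfold nextR
              by_cases hCne : C.Nonempty
              · rw [dif_pos hCne]
                exact mem_insert_of_mem (mem_sdiff.2 ⟨ha, haC⟩)
              · rw [dif_neg hCne]
                exact mem_insert_of_mem ha
            obtain ⟨w, hwU', hwa⟩ := h3 a this
            exact ⟨w, mem_union_left _ hwU', hwa⟩
        · intro k hk hk'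
          rcases Nat.eq_or_lt_of_le hk with heq | hlt
          · -- k = j + 2
            by_cases hCne : C.Nonempty
            · obtain ⟨c, hc⟩ := hCne
              have hcI := mem_Icc.1 (hC hc)
              refine ⟨(c, j + 1), mem_inter.2 ⟨mem_cohook.2 ⟨by simp; omega, Or.inl ⟨by simp; omega, by simp; omega⟩⟩,
                mem_union_right _ (mem_image.2 ⟨c, hc, rfl⟩)⟩⟩
            · have : k ∈ nextR j R C := by
                unfold nextR; rw [dif_neg hCne]; rw [← heq]; exact mem_insert_self _ _
              obtain ⟨w, hwU', hwa⟩ := h3 k this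
              have hw2 := hU'high w hwU'
              have hwI := mem_indexSet.1 (mem_filter.1 (hs hwU')).1
              exact ⟨w, mem_inter.2 ⟨mem_cohook.2 ⟨by omega, Or.inr ⟨hwa, by omega⟩⟩,
                mem_union_left _ hwU'⟩⟩
          · obtain ⟨w, hw⟩ := h4 k (by omega) hk'
            rw [mem_inter] at hw
            exact ⟨w, mem_inter.2 ⟨hw.1, mem_union_left _ hw.2⟩⟩
      · rw [hcolsplit, image_image]
        have : (Prod.fst ∘ fun a : ℕ => (a, j + 1)) = id := rfl
        rw [this, image_id]
    · -- left inverse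
      intro U hU0
      rw [mem_filter] at hU0
      obtain ⟨hU, hCol⟩ := hU0
      have hsub := mem_extSet_subset hU
      ext p
      rw [mem_union, mem_filter]
      constructor
      · rintro (⟨hp, -⟩ | hp)
        · exact hp
        · rw [← hCol, image_image] at hp
          rcases mem_image.1 hp with ⟨q, hq, hqp⟩
          rw [mem_filter] at hq
          have hpq : p = q := by
            rw [← hqp]; exact Prod.ext rfl hq.2.symm
          rw [hpq]; exact hq.1
      · intro hp
        by_cases h2 : p.2 = j + 1
        · right
          rw [← hCol, image_image]
          exact mem_image.2 ⟨p, mem_filter.2 ⟨hp, h2⟩, Prod.ext rfl h2.symm⟩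
        · left
          have := (hsub p hp).2
          exact ⟨hp, by omega⟩
    · -- right inverse
      intro U' hU'
      have hsub' := mem_extSet_subset hU'
      ext p
      rw [mem_filter, mem_union]
      constructor
      · rintro ⟨h | h, hgt⟩
        · exact h
        · exfalso
          rcases mem_image.1 h with ⟨a, ha, rfl⟩
          simp at hgt
      · intro hp
        exact ⟨Or.inl hp, (hsub' p hp).2⟩
  rw [← Finset.sum_congr rfl key]
  apply card_eq_sum_card_fiberwise
  intro U hU
  rw [mem_coe, mem_powerset]
  intro a ha
  rcases mem_image.1 ha with ⟨p, hp, rfl⟩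
  rw [mem_filter] at hp
  have := mem_indexSet.1 ((mem_extSet_subset hU) p hp.1).1
  rw [mem_Icc]
  omega


lemma sum_pow_helper (E Q : Finset ℕ) (hQE : Q ⊆ E) (A B : ℕ) :
    ∑ t ∈ E.powerset, A ^ (Q.card - (Q \ t).card) * B ^ (Q \ t).card
      = 2 ^ (E.card - Q.card) * (A + B) ^ Q.card := by
  classical
  have := Finset.prod_add (fun a => if a ∈ Q then A else 1) (fun a => if a ∈ Q then B else 1) E
  have hL : ∏ i ∈ E, ((if i ∈ Q then A else 1) + if i ∈ Q then B else 1)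
      = 2 ^ (E.card - Q.card) * (A + B) ^ Q.card := by
    rw [← prod_filter_mul_prod_filter_not E (fun a => a ∈ Q)]
    have h1 : E.filter (fun a => a ∈ Q) = Q := by
      rw [filter_mem_eq_inter, inter_eq_right.2 hQE]
    have h2 : E.filter (fun a => ¬ a ∈ Q) = E \ Q := by
      ext a; simp [mem_sdiff]
    rw [h1, h2]
    rw [prod_congr rfl (fun a ha => by simp [ha] : ∀ a ∈ Q, ((if a ∈ Q then A else 1) + if a ∈ Q then B else 1) = A + B)]
    rw [prod_congr rfl (fun a ha => by simp [(mem_sdiff.1 ha).2] : ∀ a ∈ E \ Q, ((if a ∈ Q then A else 1) + if a ∈ Q then B else 1) = 2)]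
    rw [prod_const, prod_const, card_sdiff_of_subset hQE, mul_comm]
  have hR : ∀ t ∈ E.powerset,
      (∏ i ∈ t, (if i ∈ Q then A else 1)) * ∏ i ∈ E \ t, (if i ∈ Q then B else 1)
      = A ^ (Q.card - (Q \ t).card) * B ^ (Q \ t).card := by
    intro t ht
    rw [mem_powerset] at ht
    have e1 : ∏ i ∈ t, (if i ∈ Q then A else 1) = A ^ (t ∩ Q).card := by
      rw [← prod_filter_mul_prod_filter_not t (fun a => a ∈ Q)]
      rw [prod_congr rfl (fun a ha => if_pos (mem_filter.1 ha).2), prod_congr rfl (fun a ha => if_neg (mem_filter.1 ha).2)]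
      rw [prod_const, prod_const, one_pow, mul_one, filter_mem_eq_inter]
    have e2 : ∏ i ∈ E \ t, (if i ∈ Q then B else 1) = B ^ (Q \ t).card := by
      rw [← prod_filter_mul_prod_filter_not (E \ t) (fun a => a ∈ Q)]
      rw [prod_congr rfl (fun a ha => if_pos (mem_filter.1 ha).2), prod_congr rfl (fun a ha => if_neg (mem_filter.1 ha).2)]
      rw [prod_const, prod_const, one_pow, mul_one]
      congr 1
      have : (E \ t).filter (fun a => a ∈ Q) = Q \ t := by
        ext a
        simp only [mem_filter, mem_sdiff]
        constructor
        · rintro ⟨⟨-, hat⟩, haQ⟩; exact ⟨haQ, hat⟩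
        · rintro ⟨haQ, hat⟩; exact ⟨⟨hQE haQ, hat⟩, haQ⟩
      rw [this]
    have e3 : (t ∩ Q).card = Q.card - (Q \ t).card := by
      have := card_sdiff_add_card_inter Q t
      rw [inter_comm] at this
      omega
    rw [e1, e2, e3]
  rw [← hL, this, Finset.sum_congr rfl hR]

lemma nextR_subset {j : ℕ} {R C : Finset ℕ} (hR : R ⊆ Icc 1 (j + 1))
    (hC : C ⊆ Icc 1 (j + 1)) : nextR j R C ⊆ Icc 1 (j + 2) := by
  unfold nextR
  by_cases hCne : C.Nonempty
  · rw [dif_pos hCne]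
    intro a ha
    rcases mem_insert.1 ha with rfl | h
    · have := mem_Icc.1 (hC (min'_mem C hCne)); rw [mem_Icc]; omega
    · have := mem_Icc.1 (hR (mem_sdiff.1 h).1); rw [mem_Icc]; omega
  · rw [dif_neg hCne]
    intro a ha
    rcases mem_insert.1 ha with rfl | h
    · rw [mem_Icc]; omega
    · have := mem_Icc.1 (hR h); rw [mem_Icc]; omega

lemma nextR_erase_insert_one {j : ℕ} {R : Finset ℕ} {t : Finset ℕ}
    (ht : t ⊆ Icc 2 (j + 1)) :
    (nextR j R (insert 1 t)).erase 1 = (R.erase 1) \ t := by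
  have hne : (insert 1 t).Nonempty := insert_nonempty 1 t
  have hmin : (insert 1 t).min' hne = 1 := by
    apply le_antisymm (min'_le _ 1 (mem_insert_self 1 t))
    apply le_min'
    intro a ha
    rcases mem_insert.1 ha with rfl | h
    · exact le_rfl
    · have := mem_Icc.1 (ht h); omega
  unfold nextR
  rw [dif_pos hne, hmin]
  rw [erase_insert (by simp : (1 : ℕ) ∉ R \ insert 1 t)]
  ext a
  simp only [mem_sdiff, mem_erase, mem_insert]
  tauto

lemma nextR_erase_card {j : ℕ} {R : Finset ℕ} {t : Finset ℕ}
    (hR : R ⊆ Icc 1 (j + 1)) (ht : t ⊆ Icc 2 (j + 1)) :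
    ((nextR j R t).erase 1).card = ((R.erase 1) \ t).card + 1 := by
  rcases t.eq_empty_or_nonempty with rfl | hne
  · unfold nextR
    rw [dif_neg (by simp)]
    rw [sdiff_empty]
    rw [erase_insert_of_ne (by omega : j + 2 ≠ 1)]
    apply card_insert_of_notMem
    intro h
    have := mem_Icc.1 (hR (mem_of_mem_erase h))
    omega
  · unfold nextR
    rw [dif_pos hne]
    have hm := mem_Icc.1 (ht (min'_mem t hne))
    rw [erase_insert_of_ne (by omega : t.min' hne ≠ 1)]
    have hrw : (R \ t).erase 1 = (R.erase 1) \ t := by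
      ext a
      simp only [mem_sdiff, mem_erase]
      tauto
    rw [hrw]
    apply card_insert_of_notMem
    intro h
    exact (mem_sdiff.1 h).2 (min'_mem t hne)

lemma card_ext_formula (d : ℕ) : ∀ n j : ℕ, ∀ R : Finset ℕ, j + 1 + d = n →
    R ⊆ Icc 1 (j + 1) →
    (extSet n j R).card
      = 2 ^ ((d + 1) * (j - (R.erase 1).card)) * (2 ^ (d + 1) - 1) ^ (R.erase 1).card
        * ∏ i ∈ range d, (2 ^ (i + 2) - 1) := by
  induction d with
  | zero =>
    intro n j R hn hR
    have hj : j = n - 1 := by omega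
    subst hj
    rw [card_ext_base n R (by omega) (by rwa [show n - 1 + 1 = n by omega] at hR)]
    simp
  | succ d ih =>
    intro n j R hn hR
    rw [card_ext_step n j R (by omega)]
    have hQE : R.erase 1 ⊆ Icc 2 (j + 1) := by
      intro a ha
      rw [mem_erase] at ha
      have := mem_Icc.1 (hR ha.2)
      rw [mem_Icc]; omega
    have hEcard : (Icc 2 (j + 1)).card = j := by rw [Nat.card_Icc]; omega
    have hq : (R.erase 1).card ≤ j := by
      have := card_le_card hQE
      omega
    set Q := R.erase 1 with hQ
    set q := Q.card with hqdef
    set A := 2 ^ (d + 1) with hA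
    have hA1 : 1 ≤ A := Nat.one_le_two_pow
    -- rewrite each summand via the induction hypothesis
    have hsummand : ∀ C ∈ (Icc 1 (j + 1)).powerset,
        (extSet n (j + 1) (nextR j R C)).card
          = A ^ (j + 1 - ((nextR j R C).erase 1).card) * (A - 1) ^ ((nextR j R C).erase 1).card
            * ∏ i ∈ range d, (2 ^ (i + 2) - 1) := by
      intro C hC
      rw [mem_powerset] at hC
      rw [ih n (j + 1) (nextR j R C) (by omega) (nextR_subset hR hC)]
      congr 2
      rw [← pow_mul]
    rw [Finset.sum_congr rfl hsummand]
    have hIcc : Icc 1 (j + 1) = insert 1 (Icc 2 (j + 1)) := by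
      ext a; simp only [mem_Icc, mem_insert]; omega
    rw [hIcc, Finset.sum_powerset_insert (by simp : (1:ℕ) ∉ Icc 2 (j + 1))]
    -- first sum : C = t  (1 ∉ C)
    have hs1 : ∀ t ∈ (Icc 2 (j + 1)).powerset,
        A ^ (j + 1 - ((nextR j R t).erase 1).card) * (A - 1) ^ ((nextR j R t).erase 1).card
            * ∏ i ∈ range d, (2 ^ (i + 2) - 1)
        = (A - 1) * (A ^ (j - (Q \ t).card) * (A - 1) ^ ((Q \ t).card))
            * ∏ i ∈ range d, (2 ^ (i + 2) - 1) := by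
      intro t ht
      rw [mem_powerset] at ht
      rw [nextR_erase_card hR ht]
      have hle : (Q \ t).card ≤ j := le_trans (card_le_card (sdiff_subset)) hq
      rw [show j + 1 - ((Q \ t).card + 1) = j - (Q \ t).card by omega]
      ring
    -- second sum : C = insert 1 t
    have hs2 : ∀ t ∈ (Icc 2 (j + 1)).powerset,
        A ^ (j + 1 - ((nextR j R (insert 1 t)).erase 1).card)
            * (A - 1) ^ ((nextR j R (insert 1 t)).erase 1).card
            * ∏ i ∈ range d, (2 ^ (i + 2) - 1)
        = A * (A ^ (j - (Q \ t).card) * (A - 1) ^ ((Q \ t).card))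
            * ∏ i ∈ range d, (2 ^ (i + 2) - 1) := by
      intro t ht
      rw [mem_powerset] at ht
      rw [nextR_erase_insert_one ht, ← hQ]
      have hle : (Q \ t).card ≤ j := le_trans (card_le_card (sdiff_subset)) hq
      rw [show j + 1 - (Q \ t).card = (j - (Q \ t).card) + 1 by omega]
      rw [pow_succ]
      ring
    rw [Finset.sum_congr rfl hs1, Finset.sum_congr rfl hs2]
    rw [← Finset.sum_mul, ← Finset.sum_mul, ← Finset.mul_sum, ← Finset.mul_sum]
    rw [← add_mul, ← add_mul]
    have hkey : ∑ t ∈ (Icc 2 (j + 1)).powerset,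
        A ^ (j - (Q \ t).card) * (A - 1) ^ ((Q \ t).card)
        = A ^ (j - q) * (2 ^ (j - q) * (A + (A - 1)) ^ q) := by
      have hterm : ∀ t ∈ (Icc 2 (j + 1)).powerset,
          A ^ (j - (Q \ t).card) * (A - 1) ^ ((Q \ t).card)
          = A ^ (j - q) * (A ^ (q - (Q \ t).card) * (A - 1) ^ ((Q \ t).card)) := by
        intro t ht
        have hle : (Q \ t).card ≤ q := card_le_card (sdiff_subset)
        rw [← mul_assoc, ← pow_add]
        rw [show j - q + (q - (Q \ t).card) = j - (Q \ t).card by omega]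
      rw [Finset.sum_congr rfl hterm, ← Finset.mul_sum]
      congr 1
      rw [sum_pow_helper (Icc 2 (j + 1)) Q hQE A (A - 1), hEcard]
    rw [hkey]
    rw [prod_range_succ]
    have hAB : A + (A - 1) = 2 ^ (d + 2) - 1 := by
      rw [hA]; have : (2:ℕ) ^ (d + 2) = 2 * 2 ^ (d + 1) := by ring
      omega
    rw [hAB]
    have h2A : (2:ℕ) ^ ((d + 1 + 1) * (j - q)) = 2 ^ (j - q) * A ^ (j - q) := by
      rw [hA, ← pow_mul, ← pow_add]
      congr 1
      ring
    rw [h2A]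
    have : (A - 1) + A = 2 ^ (d + 2) - 1 := by omega
    rw [this]
    ring

/-- The number of FB-configurations in `I_n` is `Π_{i=1}^n (2^i − 1)`. -/
theorem card_FB_configurations (n : ℕ) (hn : 0 < n) :
    ((indexSet n).powerset.filter (IsFB n)).card
      = ∏ i ∈ Finset.range n, (2 ^ (i + 1) - 1) := by
  classical
  rw [ext_zero n hn]
  rw [card_ext_formula (n - 1) n 0 ∅ (by omega) (by simp)]
  simp only [Finset.erase_empty, Finset.card_empty, Nat.mul_zero, pow_zero, one_mul, Nat.sub_zero]
  rw [show n = (n - 1) + 1 by omega, Finset.prod_range_succ']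
  simp
end

section
/- Let Λ be an artin algebra and M, X modules with E = End_Λ(M). If there exists a sequence X → M' → M'' exact in the middle with M', M'' ∈ add(M), such that the induced sequence Hom(M'',M) → Hom(M',M) → Hom(X,M) → 0 is exact, then the natural map X → Hom_E(Hom_Λ(X,M), M) is surjective. -/
private lemma key_pi {Λ : Type*} [Ring Λ] {M : Type*} [AddCommGroup M] [Module Λ M]
    (k : ℕ) (Ψ : ((Fin k → M) →ₗ[Λ] M) →ₗ[Module.End Λ M] M) :
    ∃ m : Fin k → M, ∀ g : (Fin k → M) →ₗ[Λ] M, Ψ g = g m := by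
  refine ⟨fun i => Ψ (LinearMap.proj i), fun g => ?_⟩
  have hg : g = ∑ i : Fin k,
      (g ∘ₗ LinearMap.single Λ (fun _ : Fin k => M) i) • (LinearMap.proj i) := by
    apply LinearMap.ext; intro m
    simp only [LinearMap.coe_sum, Finset.sum_apply, LinearMap.smul_apply,
      LinearMap.proj_apply, Module.End.smul_def, LinearMap.comp_apply,
      LinearMap.coe_single]
    rw [← map_sum]
    congr 1
    exact (Finset.univ_sum_single m).symm
  conv_lhs => rw [hg]
  rw [map_sum]
  simp only [map_smul, Module.End.smul_def, LinearMap.comp_apply,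
    LinearMap.coe_single, LinearMap.proj_apply]
  rw [← map_sum]
  congr 1
  exact Finset.univ_sum_single _

private lemma key_add {Λ : Type*} [Ring Λ] {M N : Type*} [AddCommGroup M] [Module Λ M]
    [AddCommGroup N] [Module Λ N]
    (hN : ∃ (k : ℕ) (ι : N →ₗ[Λ] (Fin k → M)) (π : (Fin k → M) →ₗ[Λ] N),
      π.comp ι = LinearMap.id)
    (Ψ : (N →ₗ[Λ] M) →ₗ[Module.End Λ M] M) :
    ∃ n : N, ∀ g : N →ₗ[Λ] M, Ψ g = g n := by
  obtain ⟨k, ι, π, hπι⟩ := hN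
  let Ψ' : ((Fin k → M) →ₗ[Λ] M) →ₗ[Module.End Λ M] M :=
  { toFun := fun g => Ψ (g ∘ₗ ι)
    map_add' := fun g h => by simp only [LinearMap.add_comp, map_add]
    map_smul' := fun e g => by simp only [LinearMap.smul_comp, map_smul, RingHom.id_apply] }
  obtain ⟨m, hm⟩ := key_pi k Ψ'
  refine ⟨π m, fun g => ?_⟩
  have : g = (g ∘ₗ π) ∘ₗ ι := by rw [LinearMap.comp_assoc, hπι, LinearMap.comp_id]
  conv_lhs => rw [this]
  exact hm (g ∘ₗ π)

/-- Let `Λ` be a finite-dimensional algebra over a field `K` (an artin algebra) and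
`M`, `X` finite-dimensional `Λ`-modules, `E = End_Λ(M)`. Suppose there is a sequence
`X → M' → M''` exact in the middle, with `M'`, `M''` direct summands of finite direct
sums of copies of `M` (i.e. in `add M`), such that the induced sequence
`Hom(M'',M) → Hom(M',M) → Hom(X,M) → 0` is exact. Then the natural evaluation map
`X → Hom_E(Hom_Λ(X,M), M)` is surjective: every `E`-linear map
`Hom_Λ(X,M) → M` is evaluation at some `x ∈ X`. -/
theorem eval_surjective_of_exact_presentation
    {K Λ : Type*} [Field K] [Ring Λ] [Algebra K Λ] [FiniteDimensional K Λ]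
    (M X M' M'' : Type*)
    [AddCommGroup M] [Module Λ M] [Module K M] [IsScalarTower K Λ M]
    [FiniteDimensional K M]
    [AddCommGroup X] [Module Λ X] [Module K X] [IsScalarTower K Λ X]
    [FiniteDimensional K X]
    [AddCommGroup M'] [Module Λ M'] [AddCommGroup M''] [Module Λ M'']
    -- `M' ∈ add M`:
    (hM' : ∃ (k : ℕ) (ι : M' →ₗ[Λ] (Fin k → M)) (π : (Fin k → M) →ₗ[Λ] M'),
      π.comp ι = LinearMap.id)
    -- `M'' ∈ add M`:
    (hM'' : ∃ (k : ℕ) (ι : M'' →ₗ[Λ] (Fin k → M)) (π : (Fin k → M) →ₗ[Λ] M''),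
      π.comp ι = LinearMap.id)
    (α : X →ₗ[Λ] M') (β : M' →ₗ[Λ] M'')
    -- the sequence `X → M' → M''` is exact in the middle:
    (hexact : Function.Exact α β)
    -- `Hom(M',M) → Hom(X,M) → 0` is exact, i.e. `(- ∘ α)` is surjective:
    (hsurj : Function.Surjective (fun f : M' →ₗ[Λ] M => f.comp α))
    -- exactness at `Hom(M',M)`: anything killed by `(- ∘ α)` comes from `Hom(M'',M)`:
    (hmid : ∀ g : M' →ₗ[Λ] M, g.comp α = 0 → ∃ h : M'' →ₗ[Λ] M, h.comp β = g) :
    ∀ Φ : (X →ₗ[Λ] M) →ₗ[Module.End Λ M] M, ∃ x : X, ∀ f : X →ₗ[Λ] M, Φ f = f x := by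
  intro Φ
  -- pull back Φ to an E-linear map on Hom(M', M)
  let Ψ : (M' →ₗ[Λ] M) →ₗ[Module.End Λ M] M :=
  { toFun := fun g => Φ (g ∘ₗ α)
    map_add' := fun g h => by simp only [LinearMap.add_comp, map_add]
    map_smul' := fun e g => by simp only [LinearMap.smul_comp, map_smul, RingHom.id_apply] }
  obtain ⟨m', hm'⟩ := key_add hM' Ψ
  -- show β m' = 0
  have hβ : β m' = 0 := by
    obtain ⟨k, ι'', π'', hπι''⟩ := hM''
    have h1 : ι'' (β m') = 0 := by
      funext i
      have := hm' ((LinearMap.proj i ∘ₗ ι'') ∘ₗ β)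
      have hcomp : (((LinearMap.proj i ∘ₗ ι'') ∘ₗ β) ∘ₗ α : X →ₗ[Λ] M) = 0 := by
        have hβα : β ∘ₗ α = 0 := by
          apply LinearMap.ext; intro x
          exact (hexact.apply_apply_eq_zero x)
        rw [LinearMap.comp_assoc, hβα, LinearMap.comp_zero]
      have : Ψ (((LinearMap.proj i ∘ₗ ι'') ∘ₗ β)) = 0 := by
        show Φ ((((LinearMap.proj i ∘ₗ ι'') ∘ₗ β)) ∘ₗ α) = 0
        rw [hcomp, map_zero]
      rw [hm'] at this
      simpa using this
    have := congrArg (fun f => f (β m')) hπι''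
    simp only [LinearMap.comp_apply, LinearMap.id_apply] at this
    rw [← this, h1, map_zero]
  -- hence m' = α x for some x
  obtain ⟨x, hx⟩ := (hexact m').mp hβ
  refine ⟨x, fun f => ?_⟩
  obtain ⟨g, hg⟩ := hsurj f
  simp only at hg
  calc Φ f = Φ (g ∘ₗ α) := by rw [hg]
    _ = g m' := hm' g
    _ = f x := by rw [← hx, ← hg]; rfl
end

section
/- Let Λ be a finite-dimensional algebra, M a faithful Λ-module, and X an indecomposable Λ-module with local endomorphism ring. If M ⊕ X is balanced (i.e. the natural map Λ → End_{End_Λ(M⊕X)}(M⊕X) is surjective), then X is generated by M or X is cogenerated by M. -/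
section LocalAux
variable {R : Type*} [Ring R] [IsLocalRing R]

/-- In a (possibly noncommutative) local ring, `1 - a` is a unit when `a` is not. -/
lemma aux_isUnit_one_sub {a : R} (h : ¬ IsUnit a) : IsUnit (1 - a) :=
  (IsLocalRing.isUnit_or_isUnit_of_add_one (a := a) (b := 1 - a)
    (by rw [add_sub_cancel])).resolve_left h

/-- In a (possibly noncommutative) local ring, if `c * a` is a unit then so is `a`. -/
lemma aux_isUnit_of_mul {c a : R} (h : IsUnit (c * a)) : IsUnit a := by
  obtain ⟨u, hu⟩ := h
  set v : R := (↑u⁻¹ : R) * c with hv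
  have hva : v * a = 1 := by
    rw [hv, mul_assoc, ← hu, Units.inv_mul]
  have hidem : (a * v) * (a * v) = a * v := by
    calc (a * v) * (a * v) = a * ((v * a) * v) := by noncomm_ring
    _ = a * v := by rw [hva, one_mul]
  rcases IsLocalRing.isUnit_or_isUnit_of_add_one
      (a := a * v) (b := 1 - a * v) (by rw [add_sub_cancel]) with h1 | h2
  · have hav1 : a * v = 1 := h1.mul_left_cancel (by rw [hidem, mul_one])
    exact ⟨⟨a, v, hav1, hva⟩, rfl⟩
  · exfalso
    obtain ⟨w, hw⟩ := h2
    have hza : (↑w : R) * a = 0 := by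
      rw [hw]
      calc (1 - a * v) * a = a - a * (v * a) := by noncomm_ring
      _ = 0 := by rw [hva, mul_one, sub_self]
    have ha0 : a = 0 := by
      calc a = ((↑w⁻¹ : R) * ↑w) * a := by rw [Units.inv_mul, one_mul]
      _ = (↑w⁻¹ : R) * (↑w * a) := by rw [mul_assoc]
      _ = 0 := by rw [hza, mul_zero]
    rw [ha0, mul_zero] at hva
    exact zero_ne_one hva

omit [IsLocalRing R] in
lemma aux_smul_eq_zero_of_unit {M : Type*} [AddCommGroup M] [Module R M]
    {a : R} (ha : IsUnit a) {x : M} (h : a • x = 0) : x = 0 := by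
  obtain ⟨u, rfl⟩ := ha
  calc x = ((↑u⁻¹ : R) * ↑u) • x := by rw [Units.inv_mul, one_smul]
  _ = (↑u⁻¹ : R) • ((↑u : R) • x) := by rw [mul_smul]
  _ = 0 := by rw [h, smul_zero]

end LocalAux

/-- (Morita.) Let `Λ` be a finite-dimensional algebra over a field `K`, `M` a faithful
finite-dimensional `Λ`-module, and `X` an indecomposable finite-dimensional `Λ`-module
with local endomorphism ring. If `M ⊕ X` is balanced, i.e. every
`End_Λ(M ⊕ X)`-linear endomorphism of `M ⊕ X` is given by multiplication by some
element of `Λ`, then `X` is generated by `M` or `X` is cogenerated by `M`. -/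
theorem gen_or_cogen_of_balanced
    {K Λ : Type*} [Field K] [Ring Λ] [Algebra K Λ] [FiniteDimensional K Λ]
    (M X : Type*)
    [AddCommGroup M] [Module Λ M] [Module K M] [IsScalarTower K Λ M]
    [FiniteDimensional K M]
    [AddCommGroup X] [Module Λ X] [Module K X] [IsScalarTower K Λ X]
    [FiniteDimensional K X]
    -- `M` is faithful:
    (hfaithful : ∀ a : Λ, (∀ m : M, a • m = 0) → a = 0)
    -- `X` is indecomposable with local endomorphism ring:
    (hlocal : IsLocalRing (Module.End Λ X))
    -- `M ⊕ X` is balanced: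
    (hbal : ∀ φ : (M × X) →ₗ[Module.End Λ (M × X)] (M × X),
      ∃ a : Λ, ∀ v : M × X, φ v = a • v) :
    (∃ (k : ℕ) (g : (Fin k → M) →ₗ[Λ] X), Function.Surjective g) ∨
      (∃ (k : ℕ) (g : X →ₗ[Λ] (Fin k → M)), Function.Injective g) := by
  classical
  haveI := hlocal
  haveI : IsNoetherian K X := IsNoetherian.iff_fg.mpr ‹FiniteDimensional K X›
  haveI : IsNoetherian Λ X := isNoetherian_of_tower K inferInstance
  haveI : IsArtinian Λ X := isArtinian_of_tower K inferInstance
  -- the trace of `M` in `X` and the reject of `M` in `X`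
  set T : Submodule Λ X := ⨆ f : M →ₗ[Λ] X, LinearMap.range f with hTdef
  set Rj : Submodule Λ X := ⨅ g : X →ₗ[Λ] M, LinearMap.ker g with hRdef
  -- if the trace is everything, `X` is generated by `M`
  by_cases hTtop : T = ⊤
  · left
    have hcomp := (Submodule.fg_iff_compact (⊤ : Submodule Λ X)).mp
      (IsNoetherian.noetherian ⊤)
    obtain ⟨S, hS⟩ := CompleteLattice.IsCompactElement.exists_finset_of_le_iSup _ hcomp
      (fun f : M →ₗ[Λ] X => LinearMap.range f) (le_of_eq hTtop.symm)
    set k := S.card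
    set σ : Fin k → (M →ₗ[Λ] X) := fun i => (S.equivFin.symm i : M →ₗ[Λ] X) with hσ
    refine ⟨k, LinearMap.lsum Λ (fun _ : Fin k => M) ℕ σ, ?_⟩
    rw [← LinearMap.range_eq_top]
    rw [eq_top_iff]
    refine le_trans hS ?_
    refine iSup₂_le fun f hf => ?_
    rintro y ⟨m, rfl⟩
    refine ⟨Pi.single (S.equivFin ⟨f, hf⟩) m, ?_⟩
    have : σ (S.equivFin ⟨f, hf⟩) = f := by
      rw [hσ]; simp
    conv_rhs => rw [← this]
    simp [LinearMap.lsum_apply, LinearMap.apply_single]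
  -- if the reject is zero, `X` is cogenerated by `M`
  by_cases hRbot : Rj = ⊥
  · right
    obtain ⟨V, hVmem, hVmin⟩ :=
      (wellFounded_lt (α := Submodule Λ X)).has_min
        {p : Submodule Λ X | ∃ S : Finset (X →ₗ[Λ] M), p = ⨅ g ∈ S, LinearMap.ker g}
        ⟨⊤, ∅, by simp⟩
    obtain ⟨S, rfl⟩ := hVmem
    have hVle : ∀ g : X →ₗ[Λ] M, (⨅ g ∈ S, LinearMap.ker g) ≤ LinearMap.ker g := by
      intro g
      by_contra hle
      have hlt : (⨅ g' ∈ insert g S, LinearMap.ker g') < ⨅ g ∈ S, LinearMap.ker g := by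
        rw [Finset.iInf_insert]
        exact lt_of_le_of_ne inf_le_right (by
          intro h
          exact hle (h ▸ inf_le_left))
      exact hVmin _ ⟨insert g S, rfl⟩ hlt
    have hbot : (⨅ g ∈ S, LinearMap.ker g) = ⊥ := by
      rw [← hRbot, hRdef]
      exact le_antisymm (le_iInf hVle) (le_iInf₂ fun g hg => iInf_le _ g)
    set k := S.card
    set σ : Fin k → (X →ₗ[Λ] M) := fun i => (S.equivFin.symm i : X →ₗ[Λ] M) with hσ
    refine ⟨k, LinearMap.pi (fun i => σ i), ?_⟩
    rw [← LinearMap.ker_eq_bot, LinearMap.ker_pi]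
    rw [← hbot]
    have : ∀ g ∈ S, True := fun _ _ => trivial
    calc (⨅ i : Fin k, LinearMap.ker (σ i))
        = ⨅ g : {g // g ∈ S}, LinearMap.ker (g : X →ₗ[Λ] M) :=
          S.equivFin.symm.iInf_comp (g := fun g : {g // g ∈ S} => LinearMap.ker (g : X →ₗ[Λ] M))
      _ = ⨅ g ∈ S, LinearMap.ker g := by rw [iInf_subtype]
  -- main case: both fail, derive a contradiction
  exfalso
  set O := Module.End Λ X with hO
  haveI : IsNoetherian O X := isNoetherian_of_tower K inferInstance
  haveI : IsArtinian O X := isArtinian_of_tower K inferInstance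
  -- trace and reject as `O`-submodules
  have smulT : ∀ (ψ : O) {x : X}, x ∈ T → ψ x ∈ T := by
    intro ψ x hx
    rw [hTdef] at hx ⊢
    refine Submodule.iSup_induction (motive := fun y => ψ y ∈ ⨆ f : M →ₗ[Λ] X, LinearMap.range f)
      _ hx ?_ ?_ ?_
    · rintro f y ⟨m, rfl⟩
      exact Submodule.mem_iSup_of_mem (ψ ∘ₗ f) ⟨m, rfl⟩
    · show ψ (0 : X) ∈ _
      rw [map_zero]; exact Submodule.zero_mem _
    · intro a b ha hb
      show ψ (a + b) ∈ _
      rw [map_add]; exact Submodule.add_mem _ ha hb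
  have smulR : ∀ (ψ : O) {x : X}, x ∈ Rj → ψ x ∈ Rj := by
    intro ψ x hx
    rw [hRdef, Submodule.mem_iInf]
    intro g
    have : x ∈ LinearMap.ker (g ∘ₗ ψ) := (hRdef ▸ iInf_le _ (g ∘ₗ ψ)) hx
    exact this
  set T' : Submodule O X :=
    { carrier := (T : Set X)
      add_mem' := fun ha hb => T.add_mem ha hb
      zero_mem' := T.zero_mem
      smul_mem' := fun ψ x hx => smulT ψ hx } with hT'
  set R' : Submodule O X :=
    { carrier := (Rj : Set X)
      add_mem' := fun ha hb => Rj.add_mem ha hb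
      zero_mem' := Rj.zero_mem
      smul_mem' := fun ψ x hx => smulR ψ hx } with hR'
  have hT'top : T' ≠ ⊤ := by
    intro h
    exact hTtop (Submodule.eq_top_iff'.mpr fun x =>
      (Submodule.eq_top_iff'.mp h x : x ∈ T))
  have hR'bot : R' ≠ ⊥ := by
    intro h
    apply hRbot
    rw [eq_bot_iff]
    intro x hx
    have : x ∈ R' := hx
    rw [h] at this
    simpa using this
  -- a coatom above the trace, and an atom below the reject
  obtain ⟨W, hWcoatom, hTW⟩ :=
    (eq_top_or_exists_le_coatom T').resolve_left hT'top
  obtain ⟨V, hVatom, hVR⟩ :=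
    (eq_bot_or_exists_atom_le R').resolve_left hR'bot
  obtain ⟨b₀, hb₀V, hb₀⟩ := Submodule.ne_bot_iff V |>.mp hVatom.1
  -- key: every nonunit of `O` kills `b₀`
  have key : ∀ a : O, ¬ IsUnit a → a • b₀ = 0 := by
    intro a ha
    by_contra hab
    have h1 : Submodule.span O {a • b₀} ≤ V :=
      Submodule.span_le.mpr (by simpa using V.smul_mem a hb₀V)
    have h2 : Submodule.span O {a • b₀} ≠ ⊥ := by
      intro hbot
      have hmem := Submodule.mem_span_singleton_self (R := O) (a • b₀)
      rw [hbot] at hmem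
      exact hab (by simpa using hmem)
    have h3 : Submodule.span O {a • b₀} = V :=
      h1.lt_or_eq.resolve_left fun hlt => h2 (hVatom.2 _ hlt)
    have hb₀mem : b₀ ∈ Submodule.span O {a • b₀} := h3 ▸ hb₀V
    obtain ⟨c, hc⟩ := Submodule.mem_span_singleton.mp hb₀mem
    rw [smul_smul] at hc
    have hca : ¬ IsUnit (c * a) := fun h => ha (aux_isUnit_of_mul h)
    have hunit : IsUnit (1 - c * a) := aux_isUnit_one_sub hca
    have : (1 - c * a) • b₀ = 0 := by
      rw [sub_smul, one_smul, hc, sub_self]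
    exact hb₀ (aux_smul_eq_zero_of_unit hunit this)
  -- the simple quotient of `X` by the coatom `W`
  set Q := X ⧸ W with hQ
  haveI : IsSimpleModule O Q := isSimpleModule_iff_isCoatom.mpr hWcoatom
  obtain ⟨xq, hxq⟩ : ∃ x : X, x ∉ W := by
    by_contra h
    push_neg at h
    exact hWcoatom.1 (Submodule.eq_top_iff'.mpr h)
  set q : Q := Submodule.Quotient.mk xq with hq
  have hqne : q ≠ 0 := by
    rw [hq, Ne, Submodule.Quotient.mk_eq_zero]
    exact hxq
  set α : O →ₗ[O] Q := LinearMap.toSpanSingleton O Q q with hα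
  have hαsurj : Function.Surjective α := by
    rw [← LinearMap.range_eq_top, ← LinearMap.span_singleton_eq_range]
    refine (eq_bot_or_eq_top (Submodule.span O {q})).resolve_left fun hbot => hqne ?_
    have hmem := Submodule.mem_span_singleton_self (R := O) q
    rw [hbot] at hmem
    simpa using hmem
  set β : O →ₗ[O] X := LinearMap.toSpanSingleton O X b₀ with hβ
  have hker : LinearMap.ker α ≤ LinearMap.ker β := by
    intro a ha
    rw [LinearMap.mem_ker] at ha ⊢
    rw [hα, LinearMap.toSpanSingleton_apply] at ha
    rw [hβ, LinearMap.toSpanSingleton_apply]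
    refine key a fun haunit => ?_
    exact hqne (aux_smul_eq_zero_of_unit haunit ha)
  set e := α.quotKerEquivOfSurjective hαsurj with he
  set h' : (O ⧸ LinearMap.ker α) →ₗ[O] X := (LinearMap.ker α).liftQ β hker with hh'
  set u : X →ₗ[O] X := (h' ∘ₗ (e.symm : Q →ₗ[O] (O ⧸ LinearMap.ker α))) ∘ₗ W.mkQ with hu
  -- `u` kills the trace
  have huT : ∀ x ∈ T, u x = 0 := by
    intro x hx
    have hxW : x ∈ W := hTW (show x ∈ T' from hx)
    have : W.mkQ x = 0 := (Submodule.Quotient.mk_eq_zero W).mpr hxW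
    rw [hu]
    simp only [LinearMap.comp_apply]
    rw [show W.mkQ x = 0 from this, map_zero, map_zero]
  -- `u` has range inside the reject
  have huR : ∀ x : X, u x ∈ Rj := by
    intro x
    have : u x ∈ LinearMap.range h' := ⟨e.symm (W.mkQ x), rfl⟩
    rw [hh', Submodule.range_liftQ] at this
    obtain ⟨a, hax⟩ := this
    rw [← hax, hβ, LinearMap.toSpanSingleton_apply]
    exact hVR (V.smul_mem a hb₀V)
  -- `u` is nonzero: it hits `b₀`
  obtain ⟨x₀, hx₀⟩ : ∃ x : X, e.symm (W.mkQ x) = Submodule.Quotient.mk (1 : O) :=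
    (e.symm.surjective.comp (Submodule.mkQ_surjective W)) (Submodule.Quotient.mk (1 : O))
  have hux₀ : u x₀ = b₀ := by
    rw [hu]
    simp only [LinearMap.comp_apply, LinearEquiv.coe_coe]
    rw [hx₀, hh', Submodule.liftQ_apply, hβ, LinearMap.toSpanSingleton_apply, one_smul]
  -- build the E-linear endomorphism of M × X
  set E := Module.End Λ (M × X) with hE
  set φ : (M × X) →ₗ[E] (M × X) :=
    { toFun := fun v => (0, u v.2)
      map_add' := by
        intro v w
        simp only [Prod.snd_add, map_add, Prod.mk_add_mk, add_zero]
      map_smul' := by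
        intro e' v
        have hsmul : ∀ w : M × X, e' • w = e' w := fun _ => rfl
        set f : M →ₗ[Λ] X := (LinearMap.snd Λ M X) ∘ₗ e' ∘ₗ (LinearMap.inl Λ M X) with hf
        set ψ : X →ₗ[Λ] X := (LinearMap.snd Λ M X) ∘ₗ e' ∘ₗ (LinearMap.inr Λ M X) with hψ
        set g : X →ₗ[Λ] M := (LinearMap.fst Λ M X) ∘ₗ e' ∘ₗ (LinearMap.inr Λ M X) with hg
        have hv : e' v = e' (v.1, 0) + e' (0, v.2) := by
          rw [← map_add]
          congr 1
          exact (Prod.ext (by simp) (by simp)).symm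
        have h2 : (e' v).2 = f v.1 + ψ v.2 := by
          rw [hv]; rfl
        have hfT : f v.1 ∈ T := Submodule.mem_iSup_of_mem f ⟨v.1, rfl⟩
        have huψ : u (ψ v.2) = ψ (u v.2) := u.map_smul ψ v.2
        simp only [RingHom.id_apply, hsmul]
        have hL : u ((e' v).2) = ψ (u v.2) := by
          rw [h2, map_add, huT _ hfT, zero_add, huψ]
        have hR : e' (0, u v.2) = (g (u v.2), ψ (u v.2)) := by
          have : ((0 : M), u v.2) = LinearMap.inr Λ M X (u v.2) := rfl
          rw [this]; rfl
        have hg0 : g (u v.2) = 0 := by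
          have : u v.2 ∈ LinearMap.ker g := (hRdef ▸ iInf_le _ g) (huR v.2)
          exact this
        rw [hL, hR, hg0] } with hφ
  obtain ⟨a, ha⟩ := hbal φ
  have ha0 : a = 0 := by
    refine hfaithful a fun m => ?_
    have := ha (m, 0)
    rw [hφ] at this
    simp only [LinearMap.coe_mk, AddHom.coe_mk, map_zero] at this
    have h1 : ((0 : M), (0 : X)) = (a • m, a • (0 : X)) := this
    have := congrArg Prod.fst h1
    simpa using this.symm
  have := ha (0, x₀)
  rw [hφ] at this
  simp only [LinearMap.coe_mk, AddHom.coe_mk, ha0, zero_smul] at this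
  have h2 : ((0 : M), u x₀) = ((0 : M), (0 : X)) := this
  have := congrArg Prod.snd h2
  rw [hux₀] at this
  exact hb₀ this
end

section
/- Let Λ be an artin algebra, M a faithfully balanced Λ-module, and X a Λ-module with X ∈ gen(M) or X ∈ cogen(M). Then M ⊕ X is faithfully balanced. -/
/-- Let `Λ` be a finite-dimensional algebra over a field `K` (an artin algebra),
`M` a faithfully balanced finite-dimensional `Λ`-module (the natural map
`Λ → End_{End_Λ(M)}(M)` is injective and surjective), and `X` a finite-dimensional
`Λ`-module with `X ∈ gen(M)` or `X ∈ cogen(M)`. Then `M ⊕ X` is faithfully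
balanced. -/
theorem faithfully_balanced_of_gen_or_cogen
    {K Λ : Type*} [Field K] [Ring Λ] [Algebra K Λ] [FiniteDimensional K Λ]
    (M X : Type*)
    [AddCommGroup M] [Module Λ M] [Module K M] [IsScalarTower K Λ M]
    [FiniteDimensional K M]
    [AddCommGroup X] [Module Λ X] [Module K X] [IsScalarTower K Λ X]
    [FiniteDimensional K X]
    -- `M` is faithful (the natural map `Λ → End_E(M)` is injective):
    (hfaithful : ∀ a : Λ, (∀ m : M, a • m = 0) → a = 0)
    -- `M` is balanced (the natural map `Λ → End_E(M)` is surjective):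
    (hbal : ∀ φ : M →ₗ[Module.End Λ M] M, ∃ a : Λ, ∀ m : M, φ m = a • m)
    -- `X ∈ gen(M)` or `X ∈ cogen(M)`:
    (hX : (∃ (k : ℕ) (g : (Fin k → M) →ₗ[Λ] X), Function.Surjective g) ∨
      (∃ (k : ℕ) (g : X →ₗ[Λ] (Fin k → M)), Function.Injective g)) :
    (∀ a : Λ, (∀ v : M × X, a • v = 0) → a = 0) ∧
      (∀ φ : (M × X) →ₗ[Module.End Λ (M × X)] (M × X),
        ∃ a : Λ, ∀ v : M × X, φ v = a • v) := by
  constructor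
  · intro a ha
    apply hfaithful
    intro m
    have := ha (m, 0)
    rw [Prod.ext_iff] at this
    simpa using this.1
  · intro φ
    -- φ commutes with every Λ-linear endomorphism of M × X
    have hsm : ∀ (f : (M × X) →ₗ[Λ] (M × X)) (v : M × X), φ (f v) = f (φ v) := by
      intro f v
      have := φ.map_smul f v
      simpa [Module.End.smul_def] using this
    -- φ preserves M × 0
    have hM0 : ∀ m : M, φ (m, 0) = ((φ (m, 0)).1, 0) := by
      intro m
      have h := hsm ((LinearMap.inl Λ M X).comp (LinearMap.fst Λ M X)) (m, 0)
      simpa using h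
    -- φ preserves 0 × X
    have hX0 : ∀ x : X, φ (0, x) = (0, (φ (0, x)).2) := by
      intro x
      have h := hsm ((LinearMap.inr Λ M X).comp (LinearMap.snd Λ M X)) (0, x)
      simpa using h
    -- the restriction of φ to M is End_Λ(M)-linear
    let φM : M →ₗ[Module.End Λ M] M :=
      { toFun := fun m => (φ (m, 0)).1
        map_add' := by
          intro m m'
          have h : ((m + m' : M), (0 : X)) = (m, 0) + (m', 0) := by simp
          show (φ (m + m', 0)).1 = (φ (m, 0)).1 + (φ (m', 0)).1
          rw [h, map_add]
          rfl
        map_smul' := by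
          intro f m
          have h := hsm ((LinearMap.inl Λ M X).comp (f.comp (LinearMap.fst Λ M X))) (m, 0)
          simp only [LinearMap.comp_apply, LinearMap.fst_apply, LinearMap.inl_apply] at h
          simp only [Module.End.smul_def, RingHom.id_apply]
          rw [h] }
    obtain ⟨a, ha⟩ := hbal φM
    have haM : ∀ m : M, φ (m, 0) = (a • m, 0) := by
      intro m
      rw [hM0 m]
      exact congrArg (fun z => (z, (0 : X))) (ha m)
    -- key: φ (0, x) = (0, a • x)
    have key : ∀ x : X, φ (0, x) = (0, a • x) := by
      rcases hX with ⟨k, g, hg⟩ | ⟨k, g, hg⟩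
      · -- gen case
        have ht : ∀ (t : M →ₗ[Λ] X) (m : M), φ (0, t m) = (0, a • t m) := by
          intro t m
          have h := hsm ((LinearMap.inr Λ M X).comp (t.comp (LinearMap.fst Λ M X))) (m, 0)
          simp only [LinearMap.comp_apply, LinearMap.fst_apply, LinearMap.inr_apply] at h
          rw [haM m] at h
          simpa [map_smul] using h
        intro x
        obtain ⟨u, rfl⟩ := hg x
        have hu : (g u : X) = ∑ i, g (Pi.single i (u i)) := by
          rw [← map_sum]
          congr 1
          exact (Finset.univ_sum_single u).symm
        rw [hu]
        have h1 : ((0 : M), ∑ i, g (Pi.single i (u i))) =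
            ∑ i, ((0 : M), g (Pi.single i (u i))) := by
          rw [Prod.ext_iff]
          simp [Prod.fst_sum, Prod.snd_sum]
        rw [h1, map_sum]
        have h2 : ∀ i : Fin k, φ ((0 : M), g (Pi.single i (u i))) =
            (0, a • g (Pi.single i (u i))) := by
          intro i
          have := ht (g.comp (LinearMap.single Λ (fun _ : Fin k => M) i)) (u i)
          simpa using this
        rw [Finset.sum_congr rfl fun i _ => h2 i]
        rw [Prod.ext_iff]
        simp [Prod.fst_sum, Prod.snd_sum, Finset.smul_sum]
      · -- cogen case
        have ht : ∀ (t : X →ₗ[Λ] M) (x : X), t ((φ (0, x)).2) = t (a • x) := by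
          intro t x
          have h := hsm ((LinearMap.inl Λ M X).comp (t.comp (LinearMap.snd Λ M X))) (0, x)
          simp only [LinearMap.comp_apply, LinearMap.snd_apply, LinearMap.inl_apply] at h
          rw [haM (t x)] at h
          have := congrArg Prod.fst h
          simp at this
          rw [← this, map_smul]
        intro x
        have hgx : g ((φ (0, x)).2) = g (a • x) := by
          funext i
          have := ht ((LinearMap.proj i).comp g) x
          simpa using this
        have := hg hgx
        rw [hX0 x, this]
    refine ⟨a, ?_⟩
    rintro ⟨m, x⟩
    have h : ((m, x) : M × X) = (m, 0) + (0, x) := by simp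
    rw [h, map_add, haM m, key x]
    rw [Prod.ext_iff]
    simp
end
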